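/- Let q ∈ ℝ, x ≥ 0, δ ∈ ℝ, let W : ℝ → ℝ be continuous on [0,x], and let ψ : (0,∞) → ℝ be differentiable with ψ(θ) → 0 and ψ′(θ) → δ as θ ↓ 0. For θ > 0 set Z(x,θ) := e^{θx}·(1 + (q−ψ(θ))·∫₀ˣ e^{−θz}W(z)dz). Then the map θ ↦ θ·Z(x,θ) + (q−ψ(θ))·W(x) is differentiable on (0,∞), and its derivative converges, as θ ↓ 0, to (1 + q·∫₀ˣ W(z)dz) − δ·W(x). -/

import Mathlib

open MeasureTheory Filter Set

open Metric in
lemma key_deriv_integral (x : ℝ) (hx : 0 ≤ x) (W g : ℝ → ℝ)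
    (hW : ContinuousOn W (Set.Icc 0 x)) (hg : Continuous g) (θ₀ : ℝ) :
    HasDerivAt (fun θ => ∫ z in (0:ℝ)..x, g z * Real.exp (-θ * z) * W z)
      (∫ z in (0:ℝ)..x, (-z * g z) * Real.exp (-θ₀ * z) * W z) θ₀ := by
  obtain ⟨M, hM⟩ := isCompact_Icc.exists_bound_of_continuousOn hW
  have huIoc : Set.uIoc (0:ℝ) x = Set.Ioc 0 x := Set.uIoc_of_le hx
  have huIcc : Set.uIcc (0:ℝ) x = Set.Icc 0 x := Set.uIcc_of_le hx
  have hWm : AEStronglyMeasurable W (volume.restrict (Set.Ioc 0 x)) :=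
    (hW.mono Set.Ioc_subset_Icc_self).aestronglyMeasurable measurableSet_Ioc
  refine (intervalIntegral.hasDerivAt_integral_of_dominated_loc_of_deriv_le
    (F := fun θ z => g z * Real.exp (-θ * z) * W z)
    (F' := fun θ z => (-z * g z) * Real.exp (-θ * z) * W z)
    (bound := fun z => |z * g z| * (Real.exp ((|θ₀| + 1) * x) * M))
    (Metric.ball_mem_nhds θ₀ one_pos) ?_ ?_ ?_ ?_ ?_ ?_).2
  · refine Eventually.of_forall fun θ => ?_
    rw [huIoc]
    exact ((hg.mul (Real.continuous_exp.comp
      (continuous_const.mul continuous_id))).aestronglyMeasurable.mul hWm)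
  · apply ContinuousOn.intervalIntegrable
    rw [huIcc]
    exact (hg.continuousOn.mul (Real.continuous_exp.comp
      (continuous_const.mul continuous_id)).continuousOn).mul hW
  · rw [huIoc]
    exact (((continuous_id.neg.mul hg).mul (Real.continuous_exp.comp
      (continuous_const.mul continuous_id))).aestronglyMeasurable.mul hWm)
  · refine Eventually.of_forall fun z hz θ hθ => ?_
    rw [huIoc] at hz
    have hz1 : 0 < z := hz.1
    have hz2 : z ≤ x := hz.2
    have hM0 : 0 ≤ M := le_trans (norm_nonneg _) (hM z ⟨hz1.le, hz2⟩)
    have hWz : |W z| ≤ M := by simpa [Real.norm_eq_abs] using hM z ⟨hz1.le, hz2⟩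
    have hθabs : |θ| ≤ |θ₀| + 1 := by
      have : dist θ θ₀ < 1 := mem_ball.mp hθ
      rw [Real.dist_eq] at this
      calc |θ| = |θ₀ + (θ - θ₀)| := by ring_nf
        _ ≤ |θ₀| + |θ - θ₀| := abs_add_le _ _
        _ ≤ |θ₀| + 1 := by linarith
    have hexp : |Real.exp (-θ * z)| ≤ Real.exp ((|θ₀| + 1) * x) := by
      rw [abs_of_pos (Real.exp_pos _)]
      apply Real.exp_le_exp.2
      have h1 : -θ * z ≤ |θ| * z := by
        have := neg_abs_le θ
        nlinarith
      have h2 : |θ| * z ≤ (|θ₀| + 1) * x := by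
        have := abs_nonneg θ
        nlinarith
      linarith
    rw [Real.norm_eq_abs, abs_mul, abs_mul]
    calc |(-z * g z)| * |Real.exp (-θ * z)| * |W z|
        ≤ |(-z * g z)| * Real.exp ((|θ₀| + 1) * x) * M := by
          apply mul_le_mul (mul_le_mul le_rfl hexp (abs_nonneg _) (abs_nonneg _)) hWz
            (abs_nonneg _) (by positivity)
      _ = |z * g z| * (Real.exp ((|θ₀| + 1) * x) * M) := by
          rw [neg_mul, abs_neg]; ring
  · apply Continuous.intervalIntegrable
    exact ((continuous_id.mul hg).abs.mul continuous_const)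
  · refine Eventually.of_forall fun z hz θ hθ => ?_
    have h1 : HasDerivAt (fun θ : ℝ => -θ * z) (-z) θ := by
      simpa using ((hasDerivAt_id θ).mul_const z).fun_neg
    have h3 := (h1.exp.const_mul (g z)).mul_const (W z)
    refine h3.congr_deriv ?_
    ring


/-- `θ ↦ Z^{(q)′}(x,θ) = θZ^{(q)}(x,θ) + (q−ψ(θ))W(x)` is differentiable on
`(0,∞)` and its derivative tends, as `θ ↓ 0`, to `Z^{(q)}(x) − ψ′(0+)·W(x)`. -/
theorem stmt_15 (q x δ : ℝ) (hx : 0 ≤ x)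
    (W : ℝ → ℝ) (hW : ContinuousOn W (Set.Icc 0 x))
    (ψ : ℝ → ℝ) (hψdiff : ∀ θ > (0:ℝ), DifferentiableAt ℝ ψ θ)
    (hψ0 : Tendsto ψ (nhdsWithin 0 (Set.Ioi 0)) (nhds 0))
    (hψ'0 : Tendsto (deriv ψ) (nhdsWithin 0 (Set.Ioi 0)) (nhds δ)) :
    (∀ θ ∈ Set.Ioi (0:ℝ), DifferentiableAt ℝ
        (fun θ => θ * (Real.exp (θ * x) *
            (1 + (q - ψ θ) * ∫ z in (0:ℝ)..x, Real.exp (-θ * z) * W z))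
          + (q - ψ θ) * W x) θ)
    ∧ Tendsto
        (deriv (fun θ => θ * (Real.exp (θ * x) *
            (1 + (q - ψ θ) * ∫ z in (0:ℝ)..x, Real.exp (-θ * z) * W z))
          + (q - ψ θ) * W x))
        (nhdsWithin 0 (Set.Ioi 0))
        (nhds ((1 + q * ∫ z in (0:ℝ)..x, W z) - δ * W x)) := by
  set I : ℝ → ℝ := fun θ => ∫ z in (0:ℝ)..x, Real.exp (-θ * z) * W z with hIdef
  set J : ℝ → ℝ := fun θ => ∫ z in (0:ℝ)..x, (-z * 1) * Real.exp (-θ * z) * W z with hJdef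
  have hI : ∀ θ₀ : ℝ, HasDerivAt I (J θ₀) θ₀ := by
    intro θ₀
    have h := key_deriv_integral x hx W (fun _ => 1) hW continuous_const θ₀
    simpa only [one_mul] using h
  have hJcont : ContinuousAt J 0 := by
    have h := key_deriv_integral x hx W (fun z => -z * 1) hW (by continuity) 0
    exact h.continuousAt
  -- derivative formula on (0,∞)
  set gd : ℝ → ℝ := fun θ =>
    Real.exp (θ * x) * (1 + (q - ψ θ) * I θ)
    + θ * (x * Real.exp (θ * x) * (1 + (q - ψ θ) * I θ)
        + Real.exp (θ * x) * ((-(deriv ψ θ)) * I θ + (q - ψ θ) * J θ))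
    + (-(deriv ψ θ)) * W x with hgddef
  have hG : ∀ θ ∈ Set.Ioi (0:ℝ), HasDerivAt
      (fun θ => θ * (Real.exp (θ * x) * (1 + (q - ψ θ) * I θ)) + (q - ψ θ) * W x)
      (gd θ) θ := by
    intro θ hθ
    have hψθ : HasDerivAt ψ (deriv ψ θ) θ := (hψdiff θ hθ).hasDerivAt
    have hsub : HasDerivAt (fun θ => q - ψ θ) (-(deriv ψ θ)) θ := hψθ.const_sub q
    have hexp : HasDerivAt (fun θ : ℝ => Real.exp (θ * x)) (Real.exp (θ * x) * x) θ := by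
      simpa using ((hasDerivAt_id θ).mul_const x).exp
    have hinner : HasDerivAt (fun θ => 1 + (q - ψ θ) * I θ)
        ((-(deriv ψ θ)) * I θ + (q - ψ θ) * J θ) θ := (hsub.mul (hI θ)).const_add 1
    have hA := hexp.fun_mul hinner
    have htot := ((hasDerivAt_id θ).fun_mul hA).fun_add (hsub.mul_const (W x))
    refine htot.congr_deriv ?_
    simp only [hgddef, id_eq]
    ring
  constructor
  · exact fun θ hθ => (hG θ hθ).differentiableAt
  · have heq : deriv (fun θ => θ * (Real.exp (θ * x) * (1 + (q - ψ θ) * I θ)) + (q - ψ θ) * W x)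
        =ᶠ[nhdsWithin 0 (Set.Ioi 0)] gd := by
      filter_upwards [self_mem_nhdsWithin] with θ hθ
      exact (hG θ hθ).deriv
    refine Tendsto.congr' heq.symm ?_
    have hmono : nhdsWithin (0:ℝ) (Set.Ioi 0) ≤ nhds 0 := nhdsWithin_le_nhds
    have hθ0 : Tendsto (fun θ : ℝ => θ) (nhdsWithin 0 (Set.Ioi 0)) (nhds 0) :=
      tendsto_id.mono_left hmono
    have hI0 : Tendsto I (nhdsWithin 0 (Set.Ioi 0)) (nhds (I 0)) :=
      ((hI 0).continuousAt.tendsto).mono_left hmono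
    have hJ0 : Tendsto J (nhdsWithin 0 (Set.Ioi 0)) (nhds (J 0)) :=
      (hJcont.tendsto).mono_left hmono
    have hexp0 : Tendsto (fun θ : ℝ => Real.exp (θ * x)) (nhdsWithin 0 (Set.Ioi 0))
        (nhds 1) := by
      have : ContinuousAt (fun θ : ℝ => Real.exp (θ * x)) 0 :=
        (Real.continuous_exp.comp (continuous_id.mul continuous_const)).continuousAt
      have h := this.tendsto.mono_left hmono
      simpa using h
    have hB : Tendsto (fun θ => 1 + (q - ψ θ) * I θ) (nhdsWithin 0 (Set.Ioi 0))
        (nhds (1 + (q - 0) * I 0)) :=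
      ((tendsto_const_nhds.sub hψ0).mul hI0).const_add 1
    have hC : Tendsto (fun θ => (-(deriv ψ θ)) * I θ + (q - ψ θ) * J θ)
        (nhdsWithin 0 (Set.Ioi 0)) (nhds ((-δ) * I 0 + (q - 0) * J 0)) :=
      (hψ'0.neg.mul hI0).add ((tendsto_const_nhds.sub hψ0).mul hJ0)
    have htot : Tendsto gd (nhdsWithin 0 (Set.Ioi 0))
        (nhds (1 * (1 + (q - 0) * I 0)
          + 0 * (x * 1 * (1 + (q - 0) * I 0) + 1 * ((-δ) * I 0 + (q - 0) * J 0))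
          + (-δ) * W x)) :=
      ((hexp0.mul hB).add (hθ0.mul (((tendsto_const_nhds.mul hexp0).mul hB).add
        (hexp0.mul hC)))).add (hψ'0.neg.mul tendsto_const_nhds)
    have hI0eq : I 0 = ∫ z in (0:ℝ)..x, W z := by
      simp [hIdef]
    convert htot using 2
    rw [hI0eq]
    ring
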